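/- For any two groups A and B, the kernel of the natural homomorphism A * B → A × B (induced by the inclusions into the factors) is a free group. -/

import Mathlib

open Monoid CategoryTheory CategoryTheory.ActionCategory SemidirectProduct

namespace Stmt2Aux

noncomputable section

variable (A B : Type*) [Group A] [Group B]

/-- The action of `A ∗ B` on `A × B` via `toProd` and left multiplication. -/
def prodAction : MulAction (Coprod A B) (A × B) := MulAction.compHom _ Coprod.toProd

attribute [local instance] prodAction

variable {A B}

theorem smul_def (g : Coprod A B) (x : A × B) : g • x = Coprod.toProd g * x := rfl

theorem inl_smul (a : A) (x : A × B) : (Coprod.inl a : Coprod A B) • x = (a * x.1, x.2) := by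
  cases x; simp [smul_def, Coprod.toProd_apply_inl, Prod.mul_def]

theorem inr_smul (b : B) (x : A × B) : (Coprod.inr b : Coprod A B) • x = (x.1, b * x.2) := by
  cases x; simp [smul_def, Coprod.toProd_apply_inr, Prod.mul_def]

theorem inl_inv_smul (a : A) (x : A × B) :
    (Coprod.inl a : Coprod A B)⁻¹ • x = (a⁻¹ * x.1, x.2) := by
  rw [← map_inv, inl_smul]

theorem inr_inv_smul (b : B) (x : A × B) :
    (Coprod.inr b : Coprod A B)⁻¹ • x = (x.1, b⁻¹ * x.2) := by
  rw [← map_inv, inr_smul]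

instance : MulAction.IsPretransitive (Coprod A B) (A × B) :=
  ⟨fun x y => ⟨Coprod.inl (y.1 * x.1⁻¹) * Coprod.inr (y.2 * x.2⁻¹), by
    simp [smul_def, map_mul, Coprod.toProd_apply_inl, Coprod.toProd_apply_inr, Prod.mul_def]⟩⟩

end

end Stmt2Aux

namespace Stmt2Aux

attribute [local instance] prodAction

variable {A B : Type*} [Group A] [Group B]

/-- generating arrows of the action groupoid -/
def Arrow (p q : ActionCategory (Coprod A B) (A × B)) : Type _ :=
  {a : A // a ≠ 1 ∧ p.back.1 = 1 ∧ q.back = (a, p.back.2)} ⊕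
  {b : B // b ≠ 1 ∧ p.back.2 = 1 ∧ q.back = (p.back.1, b)}

/-- the morphism corresponding to a generating arrow -/
def ofArrow {p q : ActionCategory (Coprod A B) (A × B)} (e : Arrow p q) : p ⟶ q :=
  Sum.elim
    (fun a => Subtype.mk (Coprod.inl a.1)
      (by obtain ⟨a, -, h1, h2⟩ := a
          show (Coprod.inl a : Coprod A B) • p.back = q.back
          rw [inl_smul, h1, mul_one]; exact h2.symm))
    (fun b => Subtype.mk (Coprod.inr b.1)
      (by obtain ⟨b, -, h1, h2⟩ := b
          show (Coprod.inr b : Coprod A B) • p.back = q.back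
          rw [inr_smul, h1, mul_one]; exact h2.symm)) e

theorem ofArrow_val_inl {p q : ActionCategory (Coprod A B) (A × B)}
    (a : A) (h : a ≠ 1 ∧ p.back.1 = 1 ∧ q.back = (a, p.back.2)) :
    (ofArrow (Sum.inl ⟨a, h⟩) : p ⟶ q).val = Coprod.inl a := rfl

end Stmt2Aux

namespace Stmt2Aux

noncomputable section

open scoped Classical

attribute [local instance] prodAction

variable {A B : Type*} [Group A] [Group B] {X : Type*} [Group X]

variable (f : ∀ ⦃p q : ActionCategory (Coprod A B) (A × B)⦄, Arrow p q → X)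

/-- value on the tree path from `(1,b)` to `(a,b)` -/
def fhatA (a : A) (b : B) : X :=
  if h : a = 1 then 1 else f (p := ((1, b) : A × B)) (q := ((a, b) : A × B))
    (Sum.inl ⟨a, h, rfl, rfl⟩)

/-- value on the tree path from `(a,1)` to `(a,b)` -/
def fhatB (a : A) (b : B) : X :=
  if h : b = 1 then 1 else f (p := ((a, 1) : A × B)) (q := ((a, b) : A × B))
    (Sum.inr ⟨b, h, rfl, rfl⟩)

@[simp] theorem fhatA_one (b : B) : fhatA f 1 b = 1 := dif_pos rfl
@[simp] theorem fhatB_one (a : A) : fhatB f a 1 = 1 := dif_pos rfl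

/-- the lift on the `A` factor -/
def phiA : A →* (A × B → X) ⋊[mulAutArrow] Coprod A B where
  toFun a := ⟨fun x => fhatA f x.1 x.2 * (fhatA f (a⁻¹ * x.1) x.2)⁻¹, Coprod.inl a⟩
  map_one' := by
    ext x <;> simp
  map_mul' a₁ a₂ := by
    ext x
    · show fhatA f x.1 x.2 * (fhatA f ((a₁ * a₂)⁻¹ * x.1) x.2)⁻¹ =
        (fhatA f x.1 x.2 * (fhatA f (a₁⁻¹ * x.1) x.2)⁻¹) *
          (fhatA f ((Coprod.inl a₁ : Coprod A B)⁻¹ • x).1 ((Coprod.inl a₁ : Coprod A B)⁻¹ • x).2 *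
            (fhatA f (a₂⁻¹ * ((Coprod.inl a₁ : Coprod A B)⁻¹ • x).1)
              ((Coprod.inl a₁ : Coprod A B)⁻¹ • x).2)⁻¹)
      rw [inl_inv_smul, mul_inv_rev, mul_assoc]
      simp [mul_assoc]
    · show Coprod.inl (a₁ * a₂) = Coprod.inl a₁ * Coprod.inl a₂
      simp

/-- the lift on the `B` factor -/
def phiB : B →* (A × B → X) ⋊[mulAutArrow] Coprod A B where
  toFun b := ⟨fun x => fhatB f x.1 x.2 * (fhatB f x.1 (b⁻¹ * x.2))⁻¹, Coprod.inr b⟩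
  map_one' := by
    ext x <;> simp
  map_mul' b₁ b₂ := by
    ext x
    · show fhatB f x.1 x.2 * (fhatB f x.1 ((b₁ * b₂)⁻¹ * x.2))⁻¹ =
        (fhatB f x.1 x.2 * (fhatB f x.1 (b₁⁻¹ * x.2))⁻¹) *
          (fhatB f ((Coprod.inr b₁ : Coprod A B)⁻¹ • x).1 ((Coprod.inr b₁ : Coprod A B)⁻¹ • x).2 *
            (fhatB f ((Coprod.inr b₁ : Coprod A B)⁻¹ • x).1
              (b₂⁻¹ * ((Coprod.inr b₁ : Coprod A B)⁻¹ • x).2))⁻¹)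
      rw [inr_inv_smul, mul_inv_rev, mul_assoc]
      simp [mul_assoc]
    · show Coprod.inr (b₁ * b₂) = Coprod.inr b₁ * Coprod.inr b₂
      simp

/-- the combined lift -/
def phi : Coprod A B →* (A × B → X) ⋊[mulAutArrow] Coprod A B :=
  Coprod.lift (phiA f) (phiB f)

theorem phi_right (g : Coprod A B) : (phi f g).right = g := by
  have : (SemidirectProduct.rightHom.comp (phi f)) = MonoidHom.id (Coprod A B) := by
    apply Coprod.hom_ext <;> ext x <;> rfl
  exact DFunLike.congr_fun this g

end

end Stmt2Aux

namespace Stmt2Aux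

noncomputable section

open scoped Classical

attribute [local instance] prodAction

variable {A B : Type*} [Group A] [Group B] {X : Type*} [Group X]
variable (f : ∀ ⦃p q : ActionCategory (Coprod A B) (A × B)⦄, Arrow p q → X)

theorem F_map_of {p q : ActionCategory (Coprod A B) (A × B)} (e : Arrow p q) :
    (uncurry (phi f) (phi_right f)).map (ofArrow e) = f e := by
  obtain ⟨⟨⟩, p1, p2⟩ := p
  obtain ⟨⟨⟩, q1, q2⟩ := q
  rcases e with ⟨a, ha, h1, h2⟩ | ⟨b, hb, h1, h2⟩
  · obtain rfl : p1 = 1 := h1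
    obtain ⟨rfl, rfl⟩ : q1 = a ∧ q2 = p2 := Prod.mk.injEq .. ▸ h2
    show (phi f (Coprod.inl q1)).left (q1, q2) = _
    rw [phi, Coprod.lift_apply_inl]
    show fhatA f q1 q2 * (fhatA f (q1⁻¹ * q1) q2)⁻¹ = _
    rw [inv_mul_cancel, fhatA_one, inv_one, mul_one, fhatA, dif_neg ha]
  · obtain rfl : p2 = 1 := h1
    obtain ⟨rfl, rfl⟩ : q1 = p1 ∧ q2 = b := Prod.mk.injEq .. ▸ h2
    show (phi f (Coprod.inr q2)).left (q1, q2) = _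
    rw [phi, Coprod.lift_apply_inr]
    show fhatB f q1 q2 * (fhatB f q1 (q2⁻¹ * q2))⁻¹ = _
    rw [inv_mul_cancel, fhatB_one, inv_one, mul_one, fhatB, dif_neg hb]

end

end Stmt2Aux

namespace Stmt2Aux

noncomputable section

open scoped Classical

attribute [local instance] prodAction

variable {A B : Type*} [Group A] [Group B] {X : Type*} [Group X]

/-- build a morphism in the action category from explicit data -/
def mk (g : Coprod A B) (x y : A × B) (h : g • x = y) :
    (show ActionCategory (Coprod A B) (A × B) from x) ⟶ (show ActionCategory (Coprod A B) (A × B) from y) :=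
  Subtype.mk g h

@[simp] theorem mk_val (g : Coprod A B) (x y : A × B) (h : g • x = y) : (mk g x y h).val = g := rfl

theorem map_eq_of_val_eq (E : ActionCategory (Coprod A B) (A × B) ⥤ SingleObj X)
    {p p' q : ActionCategory (Coprod A B) (A × B)} (hp : p = p')
    (u : p ⟶ q) (v : p' ⟶ q) (hv : u.val = v.val) : E.map u = E.map v := by
  subst hp
  rw [Subtype.ext hv]

variable (E : ActionCategory (Coprod A B) (A × B) ⥤ SingleObj X)

/-- value of `E` on tree edges, `A` side -/
def EhatA (a : A) (b : B) : X :=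
  E.map (mk (Coprod.inl a) (1, b) (a, b) (by rw [inl_smul]; simp))

/-- value of `E` on tree edges, `B` side -/
def EhatB (a : A) (b : B) : X :=
  E.map (mk (Coprod.inr b) (a, 1) (a, b) (by rw [inr_smul]; simp))

theorem EhatA_spec (a1 x1 : A) (x2 : B) (h) :
    E.map (mk (Coprod.inl a1) (a1⁻¹ * x1, x2) (x1, x2) h) =
      EhatA E x1 x2 * (EhatA E (a1⁻¹ * x1) x2)⁻¹ := by
  have key : mk (Coprod.inl x1) (1, x2) (x1, x2) (by rw [inl_smul]; simp) =
      mk (Coprod.inl (a1⁻¹ * x1)) (1, x2) (a1⁻¹ * x1, x2) (by rw [inl_smul]; simp) ≫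
        mk (Coprod.inl a1) (a1⁻¹ * x1, x2) (x1, x2) h := by
    apply Subtype.ext
    show Coprod.inl x1 = Coprod.inl a1 * Coprod.inl (a1⁻¹ * x1)
    rw [← map_mul, mul_inv_cancel_left]
  have := congrArg E.map key
  rw [E.map_comp, SingleObj.comp_as_mul] at this
  rw [EhatA, EhatA, this]
  group

theorem EhatB_spec (b1 : B) (x1 : A) (x2 : B) (h) :
    E.map (mk (Coprod.inr b1) (x1, b1⁻¹ * x2) (x1, x2) h) =
      EhatB E x1 x2 * (EhatB E x1 (b1⁻¹ * x2))⁻¹ := by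
  have key : mk (Coprod.inr x2) (x1, 1) (x1, x2) (by rw [inr_smul]; simp) =
      mk (Coprod.inr (b1⁻¹ * x2)) (x1, 1) (x1, b1⁻¹ * x2) (by rw [inr_smul]; simp) ≫
        mk (Coprod.inr b1) (x1, b1⁻¹ * x2) (x1, x2) h := by
    apply Subtype.ext
    show Coprod.inr x2 = Coprod.inr b1 * Coprod.inr (b1⁻¹ * x2)
    rw [← map_mul, mul_inv_cancel_left]
  have := congrArg E.map key
  rw [E.map_comp, SingleObj.comp_as_mul] at this
  rw [EhatB, EhatB, this]
  group

variable (f : ∀ ⦃p q : ActionCategory (Coprod A B) (A × B)⦄, Arrow p q → X)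

theorem EhatA_eq (hE : ∀ ⦃p q⦄ (e : Arrow p q), E.map (ofArrow e) = f e) (a : A) (b : B) :
    EhatA E a b = fhatA f a b := by
  by_cases h : a = 1
  · subst h
    rw [fhatA_one]
    have : mk (Coprod.inl (1 : A)) (1, b) (1, b) (by rw [inl_smul]; simp) =
        𝟙 (show ActionCategory (Coprod A B) (A × B) from ((1, b) : A × B)) := by
      apply Subtype.ext
      show Coprod.inl (1 : A) = 1
      exact map_one _
    rw [EhatA, this, E.map_id]
    rfl
  · rw [fhatA, dif_neg h,
      ← hE (p := (show ActionCategory (Coprod A B) (A × B) from ((1, b) : A × B)))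
        (q := (show ActionCategory (Coprod A B) (A × B) from ((a, b) : A × B)))
        (Sum.inl ⟨a, h, rfl, rfl⟩)]
    rfl

theorem EhatB_eq (hE : ∀ ⦃p q⦄ (e : Arrow p q), E.map (ofArrow e) = f e) (a : A) (b : B) :
    EhatB E a b = fhatB f a b := by
  by_cases h : b = 1
  · subst h
    rw [fhatB_one]
    have : mk (Coprod.inr (1 : B)) (a, 1) (a, 1) (by rw [inr_smul]; simp) =
        𝟙 (show ActionCategory (Coprod A B) (A × B) from ((a, 1) : A × B)) := by
      apply Subtype.ext
      show Coprod.inr (1 : B) = 1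
      exact map_one _
    rw [EhatB, this, E.map_id]
    rfl
  · rw [fhatB, dif_neg h,
      ← hE (p := (show ActionCategory (Coprod A B) (A × B) from ((a, 1) : A × B)))
        (q := (show ActionCategory (Coprod A B) (A × B) from ((a, b) : A × B)))
        (Sum.inr ⟨b, h, rfl, rfl⟩)]
    rfl

end

end Stmt2Aux

namespace Stmt2Aux

noncomputable section

open scoped Classical

attribute [local instance] prodAction

variable {A B : Type*} [Group A] [Group B] {X : Type*} [Group X]
variable (E : ActionCategory (Coprod A B) (A × B) ⥤ SingleObj X)
variable (f : ∀ ⦃p q : ActionCategory (Coprod A B) (A × B)⦄, Arrow p q → X)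

theorem curryE_eq (hE : ∀ ⦃p q⦄ (e : Arrow p q), E.map (ofArrow e) = f e) :
    ActionCategory.curry E = phi f := by
  apply Coprod.hom_ext
  · apply MonoidHom.ext; intro a
    apply SemidirectProduct.ext
    · funext x
      obtain ⟨x1, x2⟩ := x
      show E.map (homOfPair (x1, x2) (Coprod.inl a)) = (phi f (Coprod.inl a)).left (x1, x2)
      rw [map_eq_of_val_eq E (congrArg _ (inl_inv_smul a (x1, x2)))
          (homOfPair (x1, x2) (Coprod.inl a))
          (mk (Coprod.inl a) (a⁻¹ * x1, x2) (x1, x2) (by rw [inl_smul]; simp)) rfl,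
        EhatA_spec, EhatA_eq E f hE, EhatA_eq E f hE]
      rw [phi, Coprod.lift_apply_inl]
      rfl
    · show Coprod.inl a = (phi f (Coprod.inl a)).right
      rw [phi_right]
  · apply MonoidHom.ext; intro b
    apply SemidirectProduct.ext
    · funext x
      obtain ⟨x1, x2⟩ := x
      show E.map (homOfPair (x1, x2) (Coprod.inr b)) = (phi f (Coprod.inr b)).left (x1, x2)
      rw [map_eq_of_val_eq E (congrArg _ (inr_inv_smul b (x1, x2)))
          (homOfPair (x1, x2) (Coprod.inr b))
          (mk (Coprod.inr b) (x1, b⁻¹ * x2) (x1, x2) (by rw [inr_smul]; simp)) rfl,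
        EhatB_spec, EhatB_eq E f hE, EhatB_eq E f hE]
      rw [phi, Coprod.lift_apply_inr]
      rfl
    · show Coprod.inr b = (phi f (Coprod.inr b)).right
      rw [phi_right]

end

end Stmt2Aux

namespace Stmt2Aux

noncomputable section

open scoped Classical

attribute [local instance] prodAction

variable {A B : Type*} [Group A] [Group B]

instance freeGroupoid : IsFreeGroupoid (ActionCategory (Coprod A B) (A × B)) where
  quiverGenerators := ⟨fun p q => Arrow p q⟩
  of := fun e => ofArrow e
  unique_lift := by
    intro X _ f
    refine ⟨ActionCategory.uncurry (phi f) (phi_right f), fun p q e => F_map_of f e, ?_⟩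
    intro E hE
    have h : ActionCategory.curry E = phi f := curryE_eq E f fun p q e => hE p q e
    apply Functor.hext
    · intro
      apply Unit.ext
    · refine ActionCategory.cases ?_
      intro t g
      exact heq_of_eq (congrArg
        (fun F : Coprod A B →* (A × B → X) ⋊[mulAutArrow] Coprod A B => (F g).left t) h)

end

end Stmt2Aux

open Stmt2Aux

/-- The kernel of the natural homomorphism `A * B → A × B` from the free product
to the direct product is a free group. -/
theorem stmt_2 (A B : Type*) [Group A] [Group B] :
    IsFreeGroup (Coprod.toProd : Coprod A B →* A × B).ker := by
  letI := prodAction A B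
  letI r : ActionCategory (Coprod A B) (A × B) := show A × B from (1, 1)
  haveI hc : @CategoryTheory.IsConnected (ActionCategory (Coprod A B) (A × B)) Groupoid.toCategory :=
    (inferInstance : CategoryTheory.IsConnected (ActionCategory (Coprod A B) (A × B)))
  have hf := @IsFreeGroupoid.endIsFreeOfConnectedFree _ _ hc _ r
  refine @IsFreeGroup.ofMulEquiv _ _ hf _ _ ?_
  refine MulEquiv.symm ?_
  exact
    { toFun := fun g => Subtype.mk g.1 (by
        have : Coprod.toProd g.1 = 1 := g.2
        show g.1 • ((1, 1) : A × B) = (1, 1)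
        rw [smul_def, this, one_mul])
      invFun := fun m => Subtype.mk m.1 (by
        have : (show Coprod A B from m.1) • ((1, 1) : A × B) = (1, 1) := m.2
        rw [smul_def, show ((1, 1) : A × B) = 1 from rfl, mul_one] at this
        exact this)
      left_inv := fun _ => rfl
      right_inv := fun _ => rfl
      map_mul' := fun g h => rfl }
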